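/- Let x and x' have alternating Cantor representations with digits agreeing up to position m−1, and with digits ε_m = ε'_m + 1 at position m. If ε_{m+2i−1} = d_{m+2i−1} − 1, ε_{m+2i} = 0, ε'_{m+2i−1} = 0, ε'_{m+2i} = d_{m+2i} − 1 for all i ≥ 1, then x = x'. -/

import Mathlib

open Finset

/-- Product d_1 d_2 ... d_n. -/
noncomputable def P (d : ℕ → ℕ) (n : ℕ) : ℝ := ∏ i ∈ Finset.Icc 1 n, (d i : ℝ)

/-- The alternating Cantor series sum ∑_{n≥1} (-1)^n ε_n/(d_1...d_n). -/
noncomputable def negaSum (d ε : ℕ → ℕ) : ℝ :=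
  ∑' n : ℕ, (-1 : ℝ) ^ (n + 1) * (ε (n + 1) : ℝ) / P d (n + 1)

/-- a₀ = ∑_{n≥1} (-1)^{n+1}/(d_1...d_n). -/
noncomputable def a0 (d : ℕ → ℕ) : ℝ := ∑' n : ℕ, (-1 : ℝ) ^ n / P d (n + 1)

lemma P_succ (d : ℕ → ℕ) (n : ℕ) : P d (n + 1) = P d n * d (n + 1) := by
  unfold P
  rw [Finset.prod_Icc_succ_top (Nat.le_add_left 1 n)]

lemma P_ge {d : ℕ → ℕ} (hd : ∀ n, 1 ≤ n → 2 ≤ d n) (n : ℕ) : (2 : ℝ) ^ n ≤ P d n := by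
  induction n with
  | zero => simp [P]
  | succ k ih =>
    rw [P_succ, pow_succ]
    have h2 : (2 : ℝ) ≤ d (k + 1) := by exact_mod_cast hd (k + 1) (Nat.le_add_left 1 k)
    have hp : (0 : ℝ) < 2 ^ k := by positivity
    nlinarith

lemma P_pos {d : ℕ → ℕ} (hd : ∀ n, 1 ≤ n → 2 ≤ d n) (n : ℕ) : 0 < P d n :=
  lt_of_lt_of_le (by positivity) (P_ge hd n)

lemma summable_term {d ε : ℕ → ℕ} (hd : ∀ n, 1 ≤ n → 2 ≤ d n)
    (hε : ∀ n, 1 ≤ n → ε n ≤ d n - 1) :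
    Summable (fun n : ℕ => (-1 : ℝ) ^ (n + 1) * (ε (n + 1) : ℝ) / P d (n + 1)) := by
  apply Summable.of_norm_bounded (g := fun n : ℕ => (1 / 2 : ℝ) ^ n)
  · exact summable_geometric_of_lt_one (by norm_num) (by norm_num)
  · intro n
    have hP : 0 < P d (n + 1) := P_pos hd (n + 1)
    have hPn : 0 < P d n := P_pos hd n
    have hnorm : ‖(-1 : ℝ) ^ (n + 1) * (ε (n + 1) : ℝ) / P d (n + 1)‖
        = (ε (n + 1) : ℝ) / P d (n + 1) := by
      rw [norm_div, norm_mul, norm_pow, norm_neg, norm_one, one_pow, one_mul,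
        Real.norm_natCast, Real.norm_of_nonneg hP.le]
    rw [hnorm]
    have hεd : (ε (n + 1) : ℝ) ≤ d (n + 1) := by
      have := hε (n + 1) (Nat.le_add_left 1 n)
      have : ε (n + 1) ≤ d (n + 1) := by omega
      exact_mod_cast this
    have h1 : (ε (n + 1) : ℝ) / P d (n + 1) ≤ 1 / P d n := by
      rw [P_succ]
      have hd2 : (0 : ℝ) < d (n + 1) := by
        have := hd (n + 1) (Nat.le_add_left 1 n); positivity
      rw [div_le_div_iff₀ (by positivity) hPn]
      calc (ε (n + 1) : ℝ) * P d n ≤ (d (n + 1) : ℝ) * P d n := by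
            apply mul_le_mul_of_nonneg_right hεd hPn.le
        _ = 1 * (P d n * d (n + 1)) := by ring
    have h2 : 1 / P d n ≤ (1 / 2 : ℝ) ^ n := by
      rw [div_pow, one_pow]
      exact one_div_le_one_div_of_le (by positivity) (P_ge hd n)
    linarith

lemma hasSum_telescope {d : ℕ → ℕ} (hd : ∀ n, 1 ≤ n → 2 ≤ d n) (m : ℕ) :
    HasSum (fun i : ℕ => ((d (m + i + 1) : ℝ) - 1) / P d (m + i + 1)) (1 / P d m) := by
  have hnn : ∀ i : ℕ, 0 ≤ ((d (m + i + 1) : ℝ) - 1) / P d (m + i + 1) := by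
    intro i
    have h2 : (2 : ℝ) ≤ d (m + i + 1) := by
      exact_mod_cast hd (m + i + 1) (by omega)
    have := P_pos hd (m + i + 1)
    apply div_nonneg (by linarith) this.le
  rw [hasSum_iff_tendsto_nat_of_nonneg hnn]
  have key : ∀ n : ℕ, ∑ i ∈ range n, ((d (m + i + 1) : ℝ) - 1) / P d (m + i + 1)
      = 1 / P d m - 1 / P d (m + n) := by
    intro n
    have hterm : ∀ i : ℕ, ((d (m + i + 1) : ℝ) - 1) / P d (m + i + 1)
        = 1 / P d (m + i) - 1 / P d (m + i + 1) := by
      intro i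
      have hPm : 0 < P d (m + i) := P_pos hd (m + i)
      have hd2 : (2 : ℝ) ≤ d (m + i + 1) := by exact_mod_cast hd (m + i + 1) (by omega)
      rw [P_succ]
      field_simp
    simp only [hterm]
    exact Finset.sum_range_sub' (fun i => 1 / P d (m + i)) n
  simp only [key]
  have h0 : Filter.Tendsto (fun n : ℕ => 1 / P d (m + n)) Filter.atTop (nhds 0) := by
    apply squeeze_zero (fun n => by have := P_pos hd (m + n); positivity) (g := fun n : ℕ => (1 / 2 : ℝ) ^ n)
    · intro n
      rw [div_pow, one_pow]
      refine one_div_le_one_div_of_le (by positivity) ?_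
      calc (2 : ℝ) ^ n ≤ 2 ^ (m + n) := by
            apply pow_le_pow_right₀ (by norm_num) (by omega)
        _ ≤ P d (m + n) := P_ge hd (m + n)
    · exact tendsto_pow_atTop_nhds_zero_of_lt_one (by norm_num) (by norm_num)
  simpa using (tendsto_const_nhds (x := 1 / P d m)).sub h0

theorem alternating_cantor_two_representations_eq (d ε ε' : ℕ → ℕ) (m : ℕ)
    (hm : 1 ≤ m) (hd : ∀ n, 1 ≤ n → 2 ≤ d n)
    (hε : ∀ n, 1 ≤ n → ε n ≤ d n - 1) (hε' : ∀ n, 1 ≤ n → ε' n ≤ d n - 1)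
    (hagree : ∀ n, n < m → ε n = ε' n)
    (hstep : ε m = ε' m + 1)
    (htail : ∀ i : ℕ, ε (m + 2 * i + 1) = d (m + 2 * i + 1) - 1 ∧
      ε (m + 2 * i + 2) = 0 ∧ ε' (m + 2 * i + 1) = 0 ∧
      ε' (m + 2 * i + 2) = d (m + 2 * i + 2) - 1) :
    negaSum d ε = negaSum d ε' := by
  set g : ℕ → ℝ := fun n => (-1 : ℝ) ^ (n + 1) * (ε (n + 1) : ℝ) / P d (n + 1) with hgdef
  set g' : ℕ → ℝ := fun n => (-1 : ℝ) ^ (n + 1) * (ε' (n + 1) : ℝ) / P d (n + 1) with hg'def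
  have hg : Summable g := summable_term hd hε
  have hg' : Summable g' := summable_term hd hε'
  have hsub : Summable (fun n => g n - g' n) := hg.sub hg'
  suffices h : ∑' n : ℕ, (g n - g' n) = 0 by
    have heq := Summable.tsum_sub hg hg'
    have : negaSum d ε - negaSum d ε' = 0 := by
      unfold negaSum; rw [← heq]; exact h
    linarith
  rw [← Summable.sum_add_tsum_nat_add m hsub]
  -- pointwise description of the tail
  have htail_eq : ∀ i : ℕ, g (i + m) - g' (i + m)
      = (-1 : ℝ) ^ (m + 1) * (((d (m + i + 1) : ℝ) - 1) / P d (m + i + 1)) := by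
    intro i
    have hidx : i + m + 1 = m + i + 1 := by omega
    have hd1 : 1 ≤ d (m + i + 1) := le_trans (by norm_num) (hd (m + i + 1) (by omega))
    have hcast : ((d (m + i + 1) - 1 : ℕ) : ℝ) = (d (m + i + 1) : ℝ) - 1 := by
      push_cast [Nat.cast_sub hd1]; ring
    simp only [hgdef, hg'def, hidx]
    rcases Nat.even_or_odd i with ⟨j, hj⟩ | ⟨j, hj⟩
    · -- i = j + j : position m + 2j + 1
      have hpos : m + i + 1 = m + 2 * j + 1 := by omega
      obtain ⟨h1, -, h3, -⟩ := htail j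
      rw [hpos] at hcast ⊢
      rw [h1, h3, hcast]
      have hsgn : (-1 : ℝ) ^ (m + 2 * j + 1) = (-1 : ℝ) ^ (m + 1) := by
        rw [show m + 2 * j + 1 = (m + 1) + 2 * j by ring, pow_add, pow_mul]
        norm_num
      rw [hsgn]
      push_cast
      ring
    · -- i = 2j + 1 : position m + 2j + 2
      have hpos : m + i + 1 = m + 2 * j + 2 := by omega
      obtain ⟨-, h2, -, h4⟩ := htail j
      rw [hpos] at hcast ⊢
      rw [h2, h4, hcast]
      have hsgn : (-1 : ℝ) ^ (m + 2 * j + 2) = -(-1 : ℝ) ^ (m + 1) := by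
        rw [show m + 2 * j + 2 = (m + 1) + 2 * j + 1 by ring, pow_succ, pow_add, pow_mul]
        norm_num
      rw [hsgn]
      push_cast
      ring
  have htailsum : ∑' i : ℕ, (g (i + m) - g' (i + m))
      = (-1 : ℝ) ^ (m + 1) * (1 / P d m) := by
    have := (hasSum_telescope hd m).mul_left ((-1 : ℝ) ^ (m + 1))
    rw [tsum_congr htail_eq]
    exact this.tsum_eq
  rw [htailsum]
  -- the finite part
  obtain ⟨k, rfl⟩ : ∃ k, m = k + 1 := ⟨m - 1, (Nat.succ_pred_eq_of_pos hm).symm⟩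
  have hfin : ∑ i ∈ range (k + 1), (g i - g' i) = (-1 : ℝ) ^ (k + 1) / P d (k + 1) := by
    rw [Finset.sum_range_succ]
    have hzero : ∑ i ∈ range k, (g i - g' i) = 0 := by
      apply Finset.sum_eq_zero
      intro i hi
      have : ε (i + 1) = ε' (i + 1) := hagree (i + 1) (by
        have := Finset.mem_range.mp hi; omega)
      simp [hgdef, hg'def, this]
    rw [hzero, zero_add]
    simp only [hgdef, hg'def, hstep]
    push_cast
    ring
  rw [hfin]
  rw [show (k + 1) + 1 = (k + 1) + 1 from rfl, pow_succ ((-1 : ℝ)) (k + 1)]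
  field_simp
  norm_num
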